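/- For vectors a, b ∈ F₄ⁿ, the trace of the Hermitian inner product equals the symplectic product of their binary images: Tr⟨a,b⟩ = γ(a) ⊙ γ(b)ᵀ, where ⟨a,b⟩ = Σ_i a_i† b_i and γ is applied coordinatewise. -/

import Mathlib

open scoped Classical
open Finset

/-- The trace F₄ → F₂, Tr(x) = x + x², with values read in ℤ/2. -/
noncomputable def tr2 (x : GaloisField 2 2) : ZMod 2 := if x + x ^ 2 = 0 then 0 else 1

/-- γ : F₄ → (ℤ/2)², γ(a) = (Tr(ωa), Tr(ω̄a)): 0 ↦ 00, ω̄ ↦ 01, 1 ↦ 11, ω ↦ 10. -/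
noncomputable def gammaMap (ω : GaloisField 2 2) (a : GaloisField 2 2) : ZMod 2 × ZMod 2 :=
  (tr2 (ω * a), tr2 ((ω + 1) * a))

private lemma F4_char2 : (2 : GaloisField 2 2) = 0 := by
  have : CharP (GaloisField 2 2) 2 := inferInstance
  exact_mod_cast CharP.cast_eq_zero (GaloisField 2 2) 2

private lemma F4_pow4 (x : GaloisField 2 2) : x ^ 4 = x := by
  haveI : Fintype (GaloisField 2 2) := Fintype.ofFinite _
  have h := FiniteField.pow_card x
  have hc : Fintype.card (GaloisField 2 2) = 4 := by
    rw [← Nat.card_eq_fintype_card, GaloisField.card 2 2 (by norm_num)]; norm_num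
  rwa [hc] at h

/-- x + x² lies in the prime field. -/
private lemma sq_add_mem (x : GaloisField 2 2) : x + x ^ 2 = 0 ∨ x + x ^ 2 = 1 := by
  have h2 : (2 : GaloisField 2 2) = 0 := F4_char2
  have h4 : x ^ 4 = x := F4_pow4 x
  have hs : (x + x ^ 2) ^ 2 = x + x ^ 2 := by
    linear_combination h4 + x ^ 3 * h2
  have : (x + x ^ 2) * ((x + x ^ 2) - 1) = 0 := by linear_combination hs
  rcases mul_eq_zero.mp this with h | h
  · exact Or.inl h
  · exact Or.inr (by linear_combination h)

private lemma F4_one_add_one : (1 : GaloisField 2 2) + 1 = 0 := by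
  have := F4_char2; linear_combination this

private lemma tr2_add (x y : GaloisField 2 2) : tr2 (x + y) = tr2 x + tr2 y := by
  have h2 : (2 : GaloisField 2 2) = 0 := F4_char2
  have hkey : (x + y) + (x + y) ^ 2 = (x + x ^ 2) + (y + y ^ 2) := by
    linear_combination x * y * h2
  rcases sq_add_mem x with hx | hx <;> rcases sq_add_mem y with hy | hy <;>
    simp only [tr2, hkey, hx, hy, add_zero, zero_add, F4_one_add_one] <;>
    simp [one_ne_zero] <;> decide

private lemma tr2_zero : tr2 0 = 0 := by simp [tr2]

private lemma tr2_sum {n : ℕ} (f : Fin n → GaloisField 2 2) :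
    tr2 (∑ i, f i) = ∑ i, tr2 (f i) := by
  classical
  induction (Finset.univ : Finset (Fin n)) using Finset.induction_on with
  | empty => simp [tr2_zero]
  | insert _ s h ih => simp [Finset.sum_insert h, tr2_add, ih]

private lemma key_per (ω : GaloisField 2 2) (hω : ω ^ 2 = ω + 1) (a b : GaloisField 2 2) :
    tr2 (a ^ 2 * b) =
      (gammaMap ω a).1 * (gammaMap ω b).2 + (gammaMap ω b).1 * (gammaMap ω a).2 := by
  have h2 : (2 : GaloisField 2 2) = 0 := F4_char2
  have ha : a ^ 4 = a := F4_pow4 a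
  have hkey : a ^ 2 * b + (a ^ 2 * b) ^ 2 =
      (ω * a + (ω * a) ^ 2) * ((ω + 1) * b + ((ω + 1) * b) ^ 2) +
      ((ω + 1) * b + ((ω + 1) * b) ^ 2) * 0 +
      ((ω + 1) * a + ((ω + 1) * a) ^ 2) * (ω * b + (ω * b) ^ 2) := by
    linear_combination (-2*a^2*b^2*ω^2 - 2*a*b^2*ω - 2*a^2*b*ω - 6*a^2*b^2*ω - 2*a*b
        - 5*a*b^2 - 5*a^2*b - 10*a^2*b^2) * hω + b^2 * ha +
      (-2*a^2*b - 2*a*b*ω - 4*a*b^2*ω - 4*a^2*b*ω - 8*a^2*b^2*ω - a*b - 2*a*b^2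
        - 5*a^2*b^2) * h2
  rw [mul_zero, add_zero] at hkey
  rcases sq_add_mem (ω * a) with hp | hp <;>
  rcases sq_add_mem ((ω + 1) * a) with hq | hq <;>
  rcases sq_add_mem (ω * b) with hr | hr <;>
  rcases sq_add_mem ((ω + 1) * b) with hs | hs <;>
    simp only [tr2, gammaMap, hkey, hp, hq, hr, hs, mul_zero, zero_mul, mul_one, one_mul,
      add_zero, zero_add, F4_one_add_one] <;>
    simp [one_ne_zero] <;> decide

/-- For a, b ∈ F₄ⁿ : Tr⟨a,b⟩ = γ(a) ⊙ γ(b)ᵀ, where ⟨a,b⟩ = Σ_i a_i† b_i with a† = a²,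
and γ is applied coordinatewise (first coordinates give z, second give x). -/
theorem trace_inner_eq_symp_vec (ω : GaloisField 2 2) (hω : ω ^ 2 = ω + 1)
    (n : ℕ) (a b : Fin n → GaloisField 2 2) :
    tr2 (∑ i, (a i) ^ 2 * b i) =
      (∑ i, (gammaMap ω (a i)).1 * (gammaMap ω (b i)).2) +
      (∑ i, (gammaMap ω (b i)).1 * (gammaMap ω (a i)).2) := by
  rw [tr2_sum, ← Finset.sum_add_distrib]
  exact Finset.sum_congr rfl fun i _ => key_per ω hω (a i) (b i)
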